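/- Let N and S be finite-dimensional Hilbert spaces and let f : (N⊗N) ⊗ (N⊗N⊗S⊗S⊗N⊗N) ⊗ (N⊗N) → S⊗S be the map applying the evaluation (cap) contractions ε ⊗ 1 ⊗ ε on the first and last noun wires. If ρ ≺ σ, α ≺ β, and δ ≺ γ (where ≺ means support inclusion of the corresponding positive operators), then f(ρ ⊗ α ⊗ δ) ≺ f(σ ⊗ β ⊗ γ), i.e., supp(f(ρ⊗α⊗δ)) ⊆ supp(f(σ⊗β⊗γ)). -/

import Mathlib

open scoped ComplexOrder

/-- The support of a matrix: the orthogonal complement of its kernel. -/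
noncomputable def suppM {ι : Type*} [Fintype ι] [DecidableEq ι] (A : Matrix ι ι ℂ) :
    Submodule ℂ (EuclideanSpace ℂ ι) :=
  (LinearMap.ker (Matrix.toEuclideanLin A))ᗮ

/-- The from-meanings-of-words-to-the-meaning-of-the-sentence map for a transitive
sentence: contract the subject and object noun wires of the verb density matrix `α`
against `ρ` and `δ`.  On simple tensors `α = a ⊗ s ⊗ b` it gives
`tr(ρᵀ a) · tr(δᵀ b) · s`. -/
noncomputable def contractF {n s : ℕ} (ρ : Matrix (Fin n) (Fin n) ℂ)
    (α : Matrix (Fin n × Fin s × Fin n) (Fin n × Fin s × Fin n) ℂ)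
    (δ : Matrix (Fin n) (Fin n) ℂ) : Matrix (Fin s) (Fin s) ℂ :=
  Matrix.of fun j j' => ∑ i, ∑ i', ∑ k, ∑ k', ρ i i' * δ k k' * α (i, j, k) (i', j', k')

open Matrix
open scoped Kronecker

/-! ### Auxiliary lemmas -/

private lemma kronCT {l m p q : Type*} (A : Matrix l m ℂ) (B : Matrix p q ℂ) :
    (A ⊗ₖ B)ᴴ = Aᴴ ⊗ₖ Bᴴ := by
  ext ⟨i, j⟩ ⟨i', j'⟩
  simp [Matrix.conjTranspose_apply, Matrix.kroneckerMap_apply]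

private lemma kronPSD {m p : Type*} [Fintype m] [DecidableEq m] [Fintype p] [DecidableEq p]
    {A : Matrix m m ℂ} {B : Matrix p p ℂ} (hA : A.PosSemidef) (hB : B.PosSemidef) :
    (A ⊗ₖ B).PosSemidef := by
  obtain ⟨A', rfl⟩ := (by classical (open scoped MatrixOrder in simpa only [star_eq_conjTranspose] using CStarAlgebra.nonneg_iff_eq_star_mul_self.mp hA.nonneg) : ∃ X : Matrix _ _ ℂ, _ = Xᴴ * X)
  obtain ⟨B', rfl⟩ := (by classical (open scoped MatrixOrder in simpa only [star_eq_conjTranspose] using CStarAlgebra.nonneg_iff_eq_star_mul_self.mp hB.nonneg) : ∃ X : Matrix _ _ ℂ, _ = Xᴴ * X)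
  rw [Matrix.mul_kronecker_mul, ← kronCT]
  exact Matrix.posSemidef_conjTranspose_mul_self _

private lemma traceCT_nonneg {m p : Type*} [Fintype m] [Fintype p] (M : Matrix m p ℂ) :
    0 ≤ (Mᴴ * M).trace := by
  rw [Matrix.trace]
  refine Finset.sum_nonneg fun j _ => ?_
  rw [Matrix.diag_apply, Matrix.mul_apply]
  refine Finset.sum_nonneg fun i _ => ?_
  simpa [Matrix.conjTranspose_apply] using star_mul_self_nonneg (M i j)

private lemma traceCT_eq_zero {m p : Type*} [Fintype m] [Fintype p] {M : Matrix m p ℂ}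
    (h : (Mᴴ * M).trace = 0) : M = 0 := by
  rw [Matrix.trace] at h
  have hd : ∀ j ∈ Finset.univ, (0:ℂ) ≤ (Mᴴ * M).diag j := by
    intro j _
    rw [Matrix.diag_apply, Matrix.mul_apply]
    refine Finset.sum_nonneg fun i _ => ?_
    simpa [Matrix.conjTranspose_apply] using star_mul_self_nonneg (M i j)
  have h0 := (Finset.sum_eq_zero_iff_of_nonneg hd).mp h
  ext i j
  have hj := h0 j (Finset.mem_univ j)
  rw [Matrix.diag_apply, Matrix.mul_apply] at hj
  have h1 : ∀ i ∈ Finset.univ, (0:ℂ) ≤ Mᴴ j i * M i j := by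
    intro i _
    simpa [Matrix.conjTranspose_apply] using star_mul_self_nonneg (M i j)
  have hij := (Finset.sum_eq_zero_iff_of_nonneg h1).mp hj i (Finset.mem_univ i)
  rw [Matrix.conjTranspose_apply] at hij
  simp [mul_eq_zero, star_eq_zero] at hij
  simpa using hij

/-- For positive semidefinite `P`, `A` the trace of `P * A` is nonnegative, and it
vanishes only if `P * A = 0`. -/
private lemma psd_trace_mul {m : Type*} [Fintype m] {P A : Matrix m m ℂ}
    (hP : P.PosSemidef) (hA : A.PosSemidef) :
    0 ≤ (P * A).trace ∧ ((P * A).trace = 0 → P * A = 0) := by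
  obtain ⟨B, rfl⟩ := (by classical (open scoped MatrixOrder in simpa only [star_eq_conjTranspose] using CStarAlgebra.nonneg_iff_eq_star_mul_self.mp hP.nonneg) : ∃ X : Matrix _ _ ℂ, _ = Xᴴ * X)
  obtain ⟨C, rfl⟩ := (by classical (open scoped MatrixOrder in simpa only [star_eq_conjTranspose] using CStarAlgebra.nonneg_iff_eq_star_mul_self.mp hA.nonneg) : ∃ X : Matrix _ _ ℂ, _ = Xᴴ * X)
  have key : (Bᴴ * B * (Cᴴ * C)).trace = ((C * Bᴴ)ᴴ * (C * Bᴴ)).trace := by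
    rw [Matrix.conjTranspose_mul, Matrix.conjTranspose_conjTranspose,
      Matrix.mul_assoc Bᴴ B (Cᴴ * C), Matrix.trace_mul_comm]
    congr 1
    simp only [Matrix.mul_assoc]
  constructor
  · rw [key]; exact traceCT_nonneg _
  · intro h
    have hCB : C * Bᴴ = 0 := traceCT_eq_zero (key ▸ h)
    have hre : Bᴴ * B * (Cᴴ * C) = Bᴴ * ((C * Bᴴ)ᴴ * C) := by
      rw [Matrix.conjTranspose_mul, Matrix.conjTranspose_conjTranspose]
      simp only [Matrix.mul_assoc]
    rw [hre, hCB]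
    simp

/-- For a Hermitian matrix, the range of the associated operator is the orthogonal
complement of its kernel. -/
private lemma range_eq_ker_orth {ι : Type*} [Fintype ι] [DecidableEq ι] {A : Matrix ι ι ℂ}
    (hA : A.IsHermitian) :
    LinearMap.range (Matrix.toEuclideanLin A) = (LinearMap.ker (Matrix.toEuclideanLin A))ᗮ := by
  have hsym := Matrix.isHermitian_iff_isSymmetric.mp hA
  set T := Matrix.toEuclideanLin A with hT
  have hle : LinearMap.range T ≤ (LinearMap.ker T)ᗮ := by
    rintro _ ⟨x, rfl⟩
    rw [Submodule.mem_orthogonal]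
    intro z hz
    have hz0 : T z = 0 := hz
    calc inner ℂ z (T x) = inner ℂ (T z) x := (hsym z x).symm
    _ = (0 : ℂ) := by rw [hz0]; simp
  refine Submodule.eq_of_le_of_finrank_eq hle ?_
  have h1 := LinearMap.finrank_range_add_finrank_ker T
  have h2 := Submodule.finrank_add_finrank_orthogonal (K := LinearMap.ker T)
  omega

/-- If the support of a Hermitian `A` is contained in the support of a Hermitian `B`,
then `A` factors as `A = B * X`. -/
private lemma exists_factor {ι : Type*} [Fintype ι] [DecidableEq ι] {A B : Matrix ι ι ℂ}
    (hA : A.IsHermitian) (hB : B.IsHermitian) (h : suppM A ≤ suppM B) :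
    ∃ X : Matrix ι ι ℂ, A = B * X := by
  have hr : LinearMap.range (Matrix.toEuclideanLin A)
      ≤ LinearMap.range (Matrix.toEuclideanLin B) := by
    rw [range_eq_ker_orth hA, range_eq_ker_orth hB]; exact h
  have hcol : ∀ j : ι, ∃ v : ι → ℂ, B *ᵥ v = A *ᵥ Pi.single j 1 := by
    intro j
    have hmem : (Matrix.toEuclideanLin A) (WithLp.toLp 2 (Pi.single j 1)) ∈
        LinearMap.range (Matrix.toEuclideanLin B) := hr ⟨_, rfl⟩
    obtain ⟨v, hv⟩ := hmem
    refine ⟨v.ofLp, ?_⟩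
    rw [Matrix.toEuclideanLin_apply, Matrix.toEuclideanLin_apply] at hv
    exact congrArg WithLp.ofLp hv
  choose v hv using hcol
  refine ⟨Matrix.of (fun i j => v j i), ?_⟩
  ext i j
  rw [Matrix.mul_apply]
  have h2 : ∑ k, B i k * (v j) k = (A *ᵥ Pi.single j 1) i := by rw [← hv j]; rfl
  have h3 : (A *ᵥ Pi.single j 1) i = A i j := by rw [Matrix.mulVec_single]; simp
  exact (h2.trans h3).symm

/-- The rank-one positive matrix built from a vector. -/
private noncomputable def wMat {s : ℕ} (x : Fin s → ℂ) : Matrix (Fin s) (Fin s) ℂ :=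
  Matrix.of fun j j' => star (x j) * x j'

private lemma wMat_posSemidef {s : ℕ} (x : Fin s → ℂ) : (wMat x).PosSemidef := by
  have h : wMat x = (Matrix.replicateRow (Fin 1) x)ᴴ * (Matrix.replicateRow (Fin 1) x) := by
    ext j j'
    simp [wMat, Matrix.mul_apply, Matrix.conjTranspose_apply]
  rw [h]
  exact Matrix.posSemidef_conjTranspose_mul_self _

private lemma sum_reorder {n s : ℕ} (g : Fin n → Fin s → Fin n → Fin n → Fin s → Fin n → ℂ) :
    ∑ j, ∑ j', ∑ i, ∑ i', ∑ k, ∑ k', g i j k i' j' k'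
      = ∑ i, ∑ j, ∑ k, ∑ i', ∑ j', ∑ k', g i j k i' j' k' :=
  calc ∑ j, ∑ j', ∑ i, ∑ i', ∑ k, ∑ k', g i j k i' j' k'
      = ∑ j, ∑ i, ∑ j', ∑ i', ∑ k, ∑ k', g i j k i' j' k' :=
        Finset.sum_congr rfl fun _ _ => Finset.sum_comm
    _ = ∑ i, ∑ j, ∑ j', ∑ i', ∑ k, ∑ k', g i j k i' j' k' := Finset.sum_comm
    _ = ∑ i, ∑ j, ∑ i', ∑ j', ∑ k, ∑ k', g i j k i' j' k' :=
        Finset.sum_congr rfl fun _ _ => Finset.sum_congr rfl fun _ _ => Finset.sum_comm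
    _ = ∑ i, ∑ j, ∑ i', ∑ k, ∑ j', ∑ k', g i j k i' j' k' :=
        Finset.sum_congr rfl fun _ _ => Finset.sum_congr rfl fun _ _ =>
          Finset.sum_congr rfl fun _ _ => Finset.sum_comm
    _ = ∑ i, ∑ j, ∑ k, ∑ i', ∑ j', ∑ k', g i j k i' j' k' :=
        Finset.sum_congr rfl fun _ _ => Finset.sum_congr rfl fun _ _ => Finset.sum_comm

/-- The quadratic form of `contractF ρ α δ` at `x` is the trace of
`(ρ ⊗ (x x†)ᵀ-pattern ⊗ δ)ᵀ * α`. -/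
private lemma quadform_eq {n s : ℕ} (ρ : Matrix (Fin n) (Fin n) ℂ)
    (α : Matrix (Fin n × Fin s × Fin n) (Fin n × Fin s × Fin n) ℂ)
    (δ : Matrix (Fin n) (Fin n) ℂ) (x : Fin s → ℂ) :
    star x ⬝ᵥ (contractF ρ α δ) *ᵥ x = ((ρ ⊗ₖ (wMat x ⊗ₖ δ))ᵀ * α).trace := by
  have hR : ((ρ ⊗ₖ (wMat x ⊗ₖ δ))ᵀ * α).trace
      = ∑ v, ∑ u, (ρ ⊗ₖ (wMat x ⊗ₖ δ)) v u * α v u := by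
    simp only [Matrix.trace, Matrix.diag_apply, Matrix.mul_apply, Matrix.transpose_apply]
    exact Finset.sum_comm
  rw [hR]
  simp only [dotProduct, Matrix.mulVec, contractF, Matrix.of_apply, Pi.star_apply,
    Fintype.sum_prod_type, Matrix.kroneckerMap_apply, wMat,
    Finset.sum_mul, Finset.mul_sum]
  rw [← sum_reorder (fun i j k i' j' k' =>
    ρ i i' * (star (x j) * x j' * δ k k') * α (i, j, k) (i', j', k'))]
  refine Finset.sum_congr rfl fun j _ => Finset.sum_congr rfl fun j' _ =>
    Finset.sum_congr rfl fun i _ => Finset.sum_congr rfl fun i' _ =>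
    Finset.sum_congr rfl fun k _ => Finset.sum_congr rfl fun k' _ => ?_
  ring

private lemma contractF_isHermitian {n s : ℕ} {ρ : Matrix (Fin n) (Fin n) ℂ}
    {α : Matrix (Fin n × Fin s × Fin n) (Fin n × Fin s × Fin n) ℂ}
    {δ : Matrix (Fin n) (Fin n) ℂ}
    (hρ : ρ.IsHermitian) (hδ : δ.IsHermitian) (hα : α.IsHermitian) :
    (contractF ρ α δ).IsHermitian := by
  rw [Matrix.IsHermitian]
  ext j j'
  rw [Matrix.conjTranspose_apply]
  show star (contractF ρ α δ j' j) = contractF ρ α δ j j'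
  simp only [contractF, Matrix.of_apply, star_sum, star_mul']
  have hterm : ∀ (i i' : Fin n) (k k' : Fin n),
      star (ρ i i') * star (δ k k') * star (α (i, j', k) (i', j, k'))
        = ρ i' i * δ k' k * α (i', j, k') (i, j', k) := by
    intro i i' k k'
    rw [hρ.apply, hδ.apply, hα.apply]
  calc ∑ i, ∑ i', ∑ k, ∑ k', star (ρ i i') * star (δ k k') * star (α (i, j', k) (i', j, k'))
      = ∑ i, ∑ i', ∑ k, ∑ k', ρ i' i * δ k' k * α (i', j, k') (i, j', k) := by
        exact Finset.sum_congr rfl fun i _ => Finset.sum_congr rfl fun i' _ =>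
          Finset.sum_congr rfl fun k _ => Finset.sum_congr rfl fun k' _ => hterm i i' k k'
    _ = ∑ i', ∑ i, ∑ k, ∑ k', ρ i' i * δ k' k * α (i', j, k') (i, j', k) := Finset.sum_comm
    _ = ∑ i', ∑ i, ∑ k', ∑ k, ρ i' i * δ k' k * α (i', j, k') (i, j', k) :=
        Finset.sum_congr rfl fun _ _ => Finset.sum_congr rfl fun _ _ => Finset.sum_comm
    _ = ∑ i, ∑ i', ∑ k, ∑ k', ρ i i' * δ k k' * α (i, j, k) (i', j', k') := rfl

private lemma contractF_posSemidef {n s : ℕ} {ρ : Matrix (Fin n) (Fin n) ℂ}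
    {α : Matrix (Fin n × Fin s × Fin n) (Fin n × Fin s × Fin n) ℂ}
    {δ : Matrix (Fin n) (Fin n) ℂ}
    (hρ : ρ.PosSemidef) (hδ : δ.PosSemidef) (hα : α.PosSemidef) :
    (contractF ρ α δ).PosSemidef := by
  refine Matrix.PosSemidef.of_dotProduct_mulVec_nonneg (contractF_isHermitian hρ.1 hδ.1 hα.1) fun x => ?_
  rw [quadform_eq]
  exact (psd_trace_mul ((kronPSD hρ (kronPSD (wMat_posSemidef x) hδ)).transpose) hα).1

/-- Monotonicity of the sentence-meaning map with respect to the entailment preorder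
`ρ ≺ σ ↔ supp ρ ⊆ supp σ`: entailment of the words yields entailment of the sentences. -/
theorem contract_mono_supp {n s : ℕ}
    (ρ σ δ γ : Matrix (Fin n) (Fin n) ℂ)
    (α β : Matrix (Fin n × Fin s × Fin n) (Fin n × Fin s × Fin n) ℂ)
    (hρ : ρ.PosSemidef) (hσ : σ.PosSemidef) (hδ : δ.PosSemidef) (hγ : γ.PosSemidef)
    (hα : α.PosSemidef) (hβ : β.PosSemidef)
    (hρ1 : ρ.trace = 1) (hσ1 : σ.trace = 1) (hδ1 : δ.trace = 1) (hγ1 : γ.trace = 1)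
    (hα1 : α.trace = 1) (hβ1 : β.trace = 1)
    (h1 : suppM ρ ≤ suppM σ) (h2 : suppM α ≤ suppM β) (h3 : suppM δ ≤ suppM γ) :
    suppM (contractF ρ α δ) ≤ suppM (contractF σ β γ) := by
  unfold suppM
  apply Submodule.orthogonal_le
  intro y hy
  rw [LinearMap.mem_ker] at hy ⊢
  have e2 : Matrix.toEuclideanLin (contractF σ β γ) y = contractF σ β γ *ᵥ y := by
    rw [Matrix.toEuclideanLin_apply]
  have hy' : contractF σ β γ *ᵥ y = 0 := by rw [← e2, hy]; rfl
  set x : Fin s → ℂ := y.ofLp with hx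
  have hq : star x ⬝ᵥ (contractF σ β γ) *ᵥ x = 0 := by
    rw [show (contractF σ β γ) *ᵥ x = 0 from hy']
    simp
  rw [quadform_eq] at hq
  have hQβ : (σ ⊗ₖ (wMat x ⊗ₖ γ))ᵀ * β = 0 :=
    (psd_trace_mul ((kronPSD hσ (kronPSD (wMat_posSemidef x) hγ)).transpose) hβ).2 hq
  obtain ⟨Mα, hMα⟩ := exists_factor hα.1 hβ.1 h2
  have hQα : (σ ⊗ₖ (wMat x ⊗ₖ γ))ᵀ * α = 0 := by
    rw [hMα, ← Matrix.mul_assoc, hQβ, Matrix.zero_mul]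
  obtain ⟨X, hX⟩ := exists_factor hρ.1 hσ.1 h1
  obtain ⟨Y, hY⟩ := exists_factor hδ.1 hγ.1 h3
  have hfac : ρ ⊗ₖ (wMat x ⊗ₖ δ)
      = (σ ⊗ₖ (wMat x ⊗ₖ γ)) * (X ⊗ₖ ((1 : Matrix (Fin s) (Fin s) ℂ) ⊗ₖ Y)) :=
    calc ρ ⊗ₖ (wMat x ⊗ₖ δ) = (σ * X) ⊗ₖ ((wMat x * 1) ⊗ₖ (γ * Y)) := by
          rw [← hX, ← hY, mul_one]
      _ = (σ * X) ⊗ₖ ((wMat x ⊗ₖ γ) * ((1 : Matrix (Fin s) (Fin s) ℂ) ⊗ₖ Y)) := by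
          rw [Matrix.mul_kronecker_mul]
      _ = (σ ⊗ₖ (wMat x ⊗ₖ γ)) * (X ⊗ₖ ((1 : Matrix (Fin s) (Fin s) ℂ) ⊗ₖ Y)) := by
          rw [Matrix.mul_kronecker_mul]
  have hPα : (ρ ⊗ₖ (wMat x ⊗ₖ δ))ᵀ * α = 0 := by
    rw [hfac, Matrix.transpose_mul, Matrix.mul_assoc, hQα, Matrix.mul_zero]
  have hquad : star x ⬝ᵥ (contractF ρ α δ) *ᵥ x = 0 := by
    rw [quadform_eq, hPα, Matrix.trace_zero]
  have hker : (contractF ρ α δ) *ᵥ x = 0 :=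
    ((contractF_posSemidef hρ hδ hα).dotProduct_mulVec_zero_iff x).mp hquad
  have e1 : Matrix.toEuclideanLin (contractF ρ α δ) y = contractF ρ α δ *ᵥ y := by
    rw [Matrix.toEuclideanLin_apply]
  apply WithLp.ofLp_injective 2
  rw [e1]
  exact hker
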